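/- Let λ > 0 and let F(x) = 1 - exp(-λx) for x > 0 be the exponential distribution function, with survival function R(x) = exp(-λx). Let Q be a PGF and let c ∈ (0,1). Then Q(R(cx)) = R(x) for all x > 0 if and only if there is an integer k ≥ 2 such that c = 1/k and Q(s) = s^k for all s ∈ [0,1] (i.e., N is degenerate at the integer k = 1/c > 1). In other words, the exponential law is N-min stable if and only if N is degenerate at an integer k > 1, with c = 1/k. -/

import Mathlib

/-- `Q : ℝ → ℝ` is the probability generating function of a positive integer-valued
random variable: `Q s = ∑ pₙ sⁿ` on `[0,1]` with `pₙ ≥ 0`, `p₀ = 0`, `∑ pₙ = 1`. -/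
def IsPGF (Q : ℝ → ℝ) : Prop :=
  ∃ p : ℕ → ℝ, (∀ n, 0 ≤ p n) ∧ p 0 = 0 ∧ (∑' n, p n) = 1 ∧
    ∀ s ∈ Set.Icc (0:ℝ) 1, Q s = ∑' n, p n * s ^ n

/-- The exponential law is N-min stable iff N is degenerate at an integer k > 1, with c = 1/k. -/
theorem exponential_min_stable_iff_degenerate
    (lam : ℝ) (hlam : 0 < lam) (F R Q : ℝ → ℝ)
    (hF : ∀ x : ℝ, 0 < x → F x = 1 - Real.exp (-(lam * x)))
    (hR : ∀ x : ℝ, 0 < x → R x = Real.exp (-(lam * x)))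
    (hQ : IsPGF Q) (c : ℝ) (hc : c ∈ Set.Ioo (0:ℝ) 1) :
    (∀ x : ℝ, 0 < x → Q (R (c * x)) = R x) ↔
      (∃ k : ℕ, 2 ≤ k ∧ c = 1 / (k : ℝ) ∧ ∀ s ∈ Set.Icc (0:ℝ) 1, Q s = s ^ k) := by
  obtain ⟨hc0, hc1⟩ := hc
  obtain ⟨p, hp_nonneg, hp0, hpsum, hQp⟩ := hQ
  have hsummable : Summable p := by
    by_contra h
    rw [tsum_eq_zero_of_not_summable h] at hpsum
    norm_num at hpsum
  have hsummable' : ∀ s : ℝ, 0 ≤ s → s ≤ 1 → Summable (fun n => p n * s ^ n) := by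
    intro s hs0 hs1
    apply hsummable.of_nonneg_of_le
      (fun n => mul_nonneg (hp_nonneg n) (pow_nonneg hs0 n))
    intro n
    exact mul_le_of_le_one_right (hp_nonneg n) (pow_le_one₀ hs0 hs1)
  constructor
  · intro hstable
    set a : ℝ := 1 / c with ha
    have ha1 : 1 < a := (one_lt_div hc0).mpr hc1
    -- Key: the series equals s^a on (0,1)
    have key : ∀ s : ℝ, 0 < s → s < 1 → (∑' n, p n * s ^ n) = s ^ a := by
      intro s hs0 hs1
      have hlogs : Real.log s < 0 := Real.log_neg hs0 hs1
      set x : ℝ := -Real.log s / (lam * c) with hx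
      have hx0 : 0 < x := div_pos (neg_pos.2 hlogs) (mul_pos hlam hc0)
      have hcx : 0 < c * x := mul_pos hc0 hx0
      have hRcx : R (c * x) = s := by
        rw [hR _ hcx]
        have h1 : -(lam * (c * x)) = Real.log s := by
          rw [hx]; field_simp
        rw [h1, Real.exp_log hs0]
      have hRx : R x = s ^ a := by
        rw [hR _ hx0, Real.rpow_def_of_pos hs0]
        congr 1
        rw [hx, ha]
        field_simp
      have h2 := hstable x hx0
      rw [hRcx, hRx] at h2
      rw [← hQp s ⟨hs0.le, hs1.le⟩, h2]
    -- vanishing of low coefficients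
    have hp_vanish : ∀ n : ℕ, (n : ℝ) < a → p n = 0 := by
      intro n hn
      by_contra hpn
      have hpn' : 0 < p n := lt_of_le_of_ne (hp_nonneg n) (Ne.symm hpn)
      set b : ℝ := a - n with hb
      have hb0 : 0 < b := by simp [hb]; linarith
      set t : ℝ := min (p n) 1 / 2 with ht
      have ht0 : 0 < t := by positivity
      have htpn : t < p n := by
        have : min (p n) 1 ≤ p n := min_le_left _ _
        rw [ht]; linarith
      have ht1 : t < 1 := by
        have : min (p n) 1 ≤ 1 := min_le_right _ _
        rw [ht]; linarith
      set s : ℝ := t ^ (1 / b) with hs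
      have hs0 : 0 < s := Real.rpow_pos_of_pos ht0 _
      have hs1 : s < 1 := Real.rpow_lt_one ht0.le ht1 (by positivity)
      have hsb : s ^ b = t := by
        rw [hs, ← Real.rpow_mul ht0.le, one_div_mul_cancel hb0.ne', Real.rpow_one]
      have hle : p n * s ^ n ≤ s ^ a := by
        rw [← key s hs0 hs1]
        exact Summable.le_tsum (hsummable' s hs0.le hs1.le) n
          (fun m _ => mul_nonneg (hp_nonneg m) (pow_nonneg hs0.le m))
      have hsa : s ^ a = t * s ^ n := by
        have : a = b + (n : ℝ) := by rw [hb]; ring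
        rw [this, Real.rpow_add hs0, hsb, Real.rpow_natCast]
      rw [hsa] at hle
      have hsn : (0:ℝ) < s ^ n := pow_pos hs0 n
      have : p n ≤ t := le_of_mul_le_mul_right (by linarith [hle]) hsn
      linarith
    set k : ℕ := ⌈a⌉₊ with hk
    have hak : a ≤ (k : ℝ) := Nat.le_ceil a
    -- reverse inequality: a ≥ k
    have hka : (k : ℝ) ≤ a := by
      have hhalf0 : (0:ℝ) < 1/2 := by norm_num
      have hhalf1 : (1:ℝ)/2 < 1 := by norm_num
      have hsum2 : Summable (fun n => p n * ((1:ℝ)/2) ^ k) :=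
        hsummable.mul_right _
      have h3 : ((1:ℝ)/2) ^ a ≤ ((1:ℝ)/2) ^ (k:ℝ) := by
        rw [← key _ hhalf0 hhalf1]
        calc (∑' n, p n * ((1:ℝ)/2) ^ n) ≤ ∑' n, p n * ((1:ℝ)/2) ^ k := by
              apply Summable.tsum_le_tsum _ (hsummable' _ hhalf0.le hhalf1.le) hsum2
              intro n
              rcases lt_or_ge (n : ℝ) a with hna | hna
              · rw [hp_vanish n hna]; simp
              · have hkn : k ≤ n := Nat.ceil_le.mpr hna
                apply mul_le_mul_of_nonneg_left _ (hp_nonneg n)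
                exact pow_le_pow_of_le_one (by norm_num) (by norm_num) hkn
          _ = ((1:ℝ)/2) ^ k * ∑' n, p n := by rw [tsum_mul_right, mul_comm]
          _ = ((1:ℝ)/2) ^ (k:ℝ) := by rw [hpsum, mul_one, Real.rpow_natCast]
      exact (Real.rpow_le_rpow_left_iff_of_base_lt_one hhalf0 hhalf1).mp h3
    have hak' : a = (k : ℝ) := le_antisymm hak hka
    have hk2 : 2 ≤ k := by
      have h1k : (1:ℝ) < (k:ℝ) := by rw [← hak']; exact ha1
      have : 1 < k := by exact_mod_cast h1k
      omega
    refine ⟨k, hk2, ?_, ?_⟩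
    · have hkpos : (0:ℝ) < (k:ℝ) := by
        have : (0:ℕ) < k := by omega
        exact_mod_cast this
      rw [ha] at hak'
      field_simp at hak' ⊢
      linarith [hak']
    · intro s hs
      rcases eq_or_lt_of_le hs.1 with h0 | h0
      · -- s = 0
        rw [← h0, hQp 0 ⟨le_refl _, by norm_num⟩]
        rw [tsum_eq_single 0 (by intro n hn; simp [zero_pow hn])]
        simp [hp0, zero_pow (by omega : k ≠ 0)]
      rcases eq_or_lt_of_le hs.2 with h1 | h1
      · -- s = 1
        rw [h1, hQp 1 ⟨by norm_num, le_refl _⟩]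
        simp [hpsum]
      · rw [hQp s hs, key s h0 h1, hak', Real.rpow_natCast]
  · rintro ⟨k, hk2, hck, hQk⟩
    intro x hx
    have hcx : 0 < c * x := mul_pos hc0 hx
    have hR1 : R (c * x) = Real.exp (-(lam * (c * x))) := hR _ hcx
    have hmem : R (c * x) ∈ Set.Icc (0:ℝ) 1 := by
      rw [hR1]
      constructor
      · exact (Real.exp_pos _).le
      · apply Real.exp_le_one_iff.mpr  -- maybe name differs
        nlinarith [mul_pos hlam hcx]
    rw [hQk _ hmem, hR1, hR x hx, ← Real.exp_nat_mul]
    congr 1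
    have hkpos : (0:ℝ) < (k:ℝ) := by
      have : (0:ℕ) < k := by omega
      exact_mod_cast this
    have : c * (k:ℝ) = 1 := by
      rw [hck]; field_simp
    linear_combination (-(lam * x)) * this
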